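/- Let p > 2 be a real number. For all u ∈ [0,1], one has (1+u)^p + (1−u)^p ≥ 2 + (2^p − 2)·u^p. -/

import Mathlib

open Real Set

lemma aux_conv {q s s' : ℝ} (hq : 1 ≤ q) (hs : 1 ≤ s) (hss : s ≤ s') :
    (s+1)^q + (s'-1)^q ≤ (s'+1)^q + (s-1)^q := by
  have hconv := convexOn_rpow hq
  set t : ℝ := 2 / (s' - s + 2) with ht
  have hd : (0:ℝ) < s' - s + 2 := by linarith
  have ht0 : 0 ≤ t := by positivity
  have ht1 : t ≤ 1 := by rw [ht, div_le_one hd]; linarith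
  have ha : (0:ℝ) ≤ s - 1 := by linarith
  have hd' : (0:ℝ) ≤ s' + 1 := by linarith
  have htt : t * (s' - s + 2) = 2 := div_mul_cancel₀ 2 hd.ne'
  have h1 := hconv.2 (mem_Ici.2 ha) (mem_Ici.2 hd')
    (by linarith : (0:ℝ) ≤ 1 - t) ht0 (by ring)
  have h2 := hconv.2 (mem_Ici.2 ha) (mem_Ici.2 hd')
    ht0 (by linarith : (0:ℝ) ≤ 1 - t) (by ring)
  simp only [smul_eq_mul] at h1 h2
  have e1 : (1-t) * (s-1) + t * (s'+1) = s + 1 := by linear_combination htt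
  have e2 : t * (s-1) + (1-t) * (s'+1) = s' - 1 := by linear_combination - htt
  rw [e1] at h1
  rw [e2] at h2
  linarith

lemma aux_step {q c v u : ℝ} (hq : 1 ≤ q) (hv : 0 < v) (hvu : v ≤ u) (hu : u ≤ 1)
    (h : c * u ^ q ≤ (1+u)^q - (1-u)^q) :
    c * v ^ q ≤ (1+v)^q - (1-v)^q := by
  have hu0 : 0 < u := hv.trans_le hvu
  have key : ∀ w : ℝ, 0 < w → w ≤ 1 →
      (1+w)^q - (1-w)^q = w^q * ((1/w+1)^q - (1/w-1)^q) := by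
    intro w hw hw1
    have h1 : 1 + w = w * (1/w + 1) := by field_simp
    have h2 : 1 - w = w * (1/w - 1) := by field_simp
    have hw1' : (0:ℝ) ≤ 1/w - 1 := by
      have := one_le_one_div hw hw1
      linarith
    rw [h1, h2, Real.mul_rpow hw.le (by positivity), Real.mul_rpow hw.le hw1']
    ring
  have hGu : c ≤ (1/u+1)^q - (1/u-1)^q := by
    have hup : (0:ℝ) < u ^ q := Real.rpow_pos_of_pos hu0 q
    have := h
    rw [key u hu0 hu] at this
    nlinarith
  have hmono : (1/u+1)^q - (1/u-1)^q ≤ (1/v+1)^q - (1/v-1)^q := by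
    have hs : (1:ℝ) ≤ 1/u := one_le_one_div hu0 hu
    have hss : 1/u ≤ 1/v := one_div_le_one_div_of_le hv hvu
    have := aux_conv hq hs hss
    linarith
  have hvp : (0:ℝ) < v ^ q := Real.rpow_pos_of_pos hv q
  rw [key v hv (hvu.trans hu)]
  nlinarith

theorem stmt_13 (p : ℝ) (hp : 2 < p) (u : ℝ) (hu : u ∈ Set.Icc (0:ℝ) 1) :
    (1 + u) ^ p + (1 - u) ^ p ≥ 2 + ((2:ℝ) ^ p - 2) * u ^ p := by
  obtain ⟨hu0, hu1⟩ := hu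
  have hp1 : (1:ℝ) ≤ p := by linarith
  have hq1 : (1:ℝ) ≤ p - 1 := by linarith
  have hp0 : (0:ℝ) < p := by linarith
  set c : ℝ := (2:ℝ)^p - 2 with hc
  set f : ℝ → ℝ := fun x => (1+x)^p + (1-x)^p - 2 - c * x^p with hf
  suffices hsuff : 0 ≤ f u by
    simp only [hf] at hsuff
    linarith
  have hder : ∀ x : ℝ, HasDerivAt f
      (p * (1+x)^(p-1) - p * (1-x)^(p-1) - c * (p * x^(p-1))) x := by
    intro x
    have h1 : HasDerivAt (fun y : ℝ => (1+y)^p) (p * (1+x)^(p-1)) x := by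
      have hin : HasDerivAt (fun y : ℝ => 1 + y) 1 x := (hasDerivAt_id x).const_add 1
      have := (Real.hasDerivAt_rpow_const (x := 1+x) (p := p) (Or.inr hp1)).comp x hin
      exact this.congr_deriv (by ring)
    have h2 : HasDerivAt (fun y : ℝ => (1-y)^p) (-(p * (1-x)^(p-1))) x := by
      have hin : HasDerivAt (fun y : ℝ => 1 - y) (0-1) x :=
        (hasDerivAt_const x (1:ℝ)).sub (hasDerivAt_id x)
      have := (Real.hasDerivAt_rpow_const (x := 1-x) (p := p) (Or.inr hp1)).comp x hin
      exact this.congr_deriv (by ring)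
    have h3 : HasDerivAt (fun y : ℝ => c * y^p) (c * (p * x^(p-1))) x :=
      (Real.hasDerivAt_rpow_const (x := x) (p := p) (Or.inr hp1)).const_mul c
    have := ((h1.add h2).sub_const 2).sub h3
    exact this.congr_deriv (by ring)
  have hcont : Continuous f := by
    have hdf : Differentiable ℝ f := fun x => (hder x).differentiableAt
    exact hdf.continuous
  have hf0 : f 0 = 0 := by
    simp [hf, Real.zero_rpow hp0.ne', Real.one_rpow]
    norm_num
  have hf1 : f 1 = 0 := by
    have : (1:ℝ) + 1 = 2 := by norm_num
    simp [hf, hc, Real.zero_rpow hp0.ne', Real.one_rpow, this]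
  rcases eq_or_lt_of_le hu0 with h0 | h0
  · rw [← h0, hf0]
  by_cases hcase : c * u^(p-1) ≤ (1+u)^(p-1) - (1-u)^(p-1)
  · -- f is monotone on [0, u]
    have hmono : MonotoneOn f (Icc 0 u) := by
      apply monotoneOn_of_deriv_nonneg (convex_Icc 0 u) hcont.continuousOn
        (fun x _ => (hder x).differentiableAt.differentiableWithinAt)
      intro x hx
      rw [interior_Icc] at hx
      rw [(hder x).deriv]
      have hstep := aux_step hq1 hx.1 hx.2.le hu1 hcase
      have hb : 0 ≤ (1+x)^(p-1) - (1-x)^(p-1) - c * x^(p-1) := by linarith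
      have : p * (1+x)^(p-1) - p * (1-x)^(p-1) - c * (p * x^(p-1))
          = p * ((1+x)^(p-1) - (1-x)^(p-1) - c * x^(p-1)) := by ring
      rw [this]
      exact mul_nonneg hp0.le hb
    have := hmono (left_mem_Icc.2 hu0) (right_mem_Icc.2 hu0) hu0
    rw [hf0] at this
    exact this
  · -- f is antitone on [u, 1]
    push_neg at hcase
    have hanti : AntitoneOn f (Icc u 1) := by
      apply antitoneOn_of_deriv_nonpos (convex_Icc u 1) hcont.continuousOn
        (fun x _ => (hder x).differentiableAt.differentiableWithinAt)
      intro x hx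
      rw [interior_Icc] at hx
      rw [(hder x).deriv]
      have hb : (1+x)^(p-1) - (1-x)^(p-1) - c * x^(p-1) ≤ 0 := by
        by_contra hcon
        push_neg at hcon
        have hx1 : c * x^(p-1) ≤ (1+x)^(p-1) - (1-x)^(p-1) := by linarith
        have := aux_step hq1 h0 hx.1.le hx.2.le hx1
        linarith
      have : p * (1+x)^(p-1) - p * (1-x)^(p-1) - c * (p * x^(p-1))
          = p * ((1+x)^(p-1) - (1-x)^(p-1) - c * x^(p-1)) := by ring
      rw [this]
      exact mul_nonpos_of_nonneg_of_nonpos hp0.le hb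
    have := hanti (left_mem_Icc.2 hu1) (right_mem_Icc.2 hu1) hu1
    rw [hf1] at this
    exact this
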